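/- arXiv:2406.02145 — 2 statements merged into one kernel-verified Lean document; each statement's English description precedes it below -/
import Mathlib

section
/- Jensen-type estimate for periodic Heisenberg convolutions: let p ≥ 1, let m : ℝ³ → [0,∞) be measurable, 1_H-periodic, with ∫_{Q_H} m dx = 1; let w : ℝ³ → ℝ be measurable, 1_H-periodic and bounded, and set E := w·m; let ρ : ℝ³ → [0,∞) be measurable with ∫_{ℝ³} ρ dx = 1. Then, with the convention that the quotient term is 0 at points where (m∗ρ)(x) = 0, ∫_{Q_H} |(E∗ρ)(x)/(m∗ρ)(x)|^p (m∗ρ)(x) dx ≤ ∫_{Q_H} |w(x)|^p m(x) dx. -/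
open MeasureTheory

noncomputable section

/-- The Heisenberg group operation on ℝ³. -/
def Hop (x y : Fin 3 → ℝ) : Fin 3 → ℝ :=
  ![x 0 + y 0, x 1 + y 1, x 2 + y 2 - x 1 * y 0 + x 0 * y 1]

/-- The unit cube Q_H = [0,1)³. -/
def QH : Set (Fin 3 → ℝ) := {q | ∀ i, q i ∈ Set.Ico (0 : ℝ) 1}

/-- Membership in the integer lattice ℤ³ ⊂ ℝ³. -/
def IsLatticePoint (n : Fin 3 → ℝ) : Prop := ∀ i, ∃ k : ℤ, n i = (k : ℝ)

/-- `1_H`-periodicity of a function. -/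
def IsHPeriodic (f : (Fin 3 → ℝ) → ℝ) : Prop :=
  ∀ n : Fin 3 → ℝ, IsLatticePoint n → ∀ x, f (Hop n x) = f x

/-- The Heisenberg convolution `(f∗ρ)(x) = ∫ f(y) ρ(x ⊕ y⁻¹) dy`. -/
def Hconv (f ρ : (Fin 3 → ℝ) → ℝ) (x : Fin 3 → ℝ) : ℝ :=
  ∫ y, f y * ρ (Hop x (-y))

set_option linter.unnecessarySeqFocus false
set_option linter.unusedVariables false
set_option linter.unusedTactic false

open Set Matrix
open scoped ENNReal



abbrev I01 : Set ℝ := Set.Ico (0:ℝ) 1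

lemma latt1 : IsLatticePoint ![1,0,0] := by
  intro i; fin_cases i
  exacts [⟨1, by norm_num⟩, ⟨0, by norm_num⟩, ⟨0, by norm_num⟩]
lemma latt2 : IsLatticePoint ![0,1,0] := by
  intro i; fin_cases i
  exacts [⟨0, by norm_num⟩, ⟨1, by norm_num⟩, ⟨0, by norm_num⟩]
lemma latt3 : IsLatticePoint ![0,0,1] := by
  intro i; fin_cases i
  exacts [⟨0, by norm_num⟩, ⟨0, by norm_num⟩, ⟨1, by norm_num⟩]

lemma measurable_vec3 (A B : ℝ) : Measurable fun u : ℝ => (![A, B, u] : Fin 3 → ℝ) := by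
  apply measurable_pi_lambda; intro i; fin_cases i <;> simp <;> fun_prop

lemma measurable_vec3' : Measurable fun q : (ℝ × ℝ) × ℝ => (![q.1.1, q.1.2, q.2] : Fin 3 → ℝ) := by
  apply measurable_pi_lambda; intro i; fin_cases i <;> simp <;> fun_prop


lemma mp_phi (x : Fin 3 → ℝ) :
    MeasurePreserving (fun z : Fin 3 → ℝ => Hop (-z) x) volume volume := by
  set M : Matrix (Fin 3) (Fin 3) ℝ := !![-1,0,0; 0,-1,0; -(x 1), x 0, -1] with hM
  have hdet : LinearMap.det (Matrix.toLin' M) = -1 := by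
    rw [LinearMap.det_toLin']
    simp [hM, Matrix.det_fin_three]
  have hmap : Measure.map (Matrix.toLin' M) volume = volume := by
    rw [Real.map_linearMap_volume_pi_eq_smul_volume_pi (by rw [hdet]; norm_num)]
    rw [hdet]
    norm_num
  have h1 : MeasurePreserving (Matrix.toLin' M) volume volume :=
    ⟨(Matrix.toLin' M).continuous_of_finiteDimensional.measurable, hmap⟩
  have h2 : MeasurePreserving (fun v : Fin 3 → ℝ => v + x) volume volume :=
    measurePreserving_add_right volume x
  have h3 := h2.comp h1
  convert h3 using 1
  funext z; funext i
  fin_cases i <;>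
    simp [Hop, Matrix.toLin'_apply, Matrix.mulVec, dotProduct, Fin.sum_univ_three, hM] <;> ring



lemma bridge (F : (Fin 3 → ℝ) → ℝ≥0∞) (hF : Measurable F) :
    ∫⁻ x in QH, F x = ∫⁻ s in I01, ∫⁻ t in I01, ∫⁻ u in I01, F ![s, t, u] := by
  have e2 : (Fin 2 → ℝ) ≃ᵐ ℝ × ℝ := MeasurableEquiv.finTwoArrow
  have mp2 : MeasurePreserving (MeasurableEquiv.finTwoArrow.symm : ℝ × ℝ ≃ᵐ (Fin 2 → ℝ))
      volume volume := (volume_preserving_finTwoArrow ℝ).symm _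
  have mp1 : MeasurePreserving
      ((MeasurableEquiv.piFinSuccAbove (fun _ : Fin 3 => ℝ) 0).symm) volume volume :=
    (volume_preserving_piFinSuccAbove (fun _ : Fin 3 => ℝ) 0).symm _
  set ψ : (ℝ × ℝ × ℝ) ≃ᵐ (Fin 3 → ℝ) :=
    ((MeasurableEquiv.refl ℝ).prodCongr MeasurableEquiv.finTwoArrow.symm).trans
      (MeasurableEquiv.piFinSuccAbove (fun _ : Fin 3 => ℝ) 0).symm with hψ
  have mpψ : MeasurePreserving ψ volume volume := by
    have : MeasurePreserving ((MeasurableEquiv.refl ℝ).prodCongr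
        (MeasurableEquiv.finTwoArrow.symm : ℝ × ℝ ≃ᵐ (Fin 2 → ℝ)))
        volume volume := by
      rw [show (volume : Measure (ℝ × ℝ × ℝ)) = Measure.prod volume volume from rfl,
          show (volume : Measure (ℝ × (Fin 2 → ℝ))) = Measure.prod volume volume from rfl]
      exact (MeasurePreserving.id volume).prod mp2
    exact mp1.comp this
  have hψval : ∀ z : ℝ × ℝ × ℝ, ψ z = ![z.1, z.2.1, z.2.2] := by
    intro z
    funext i
    fin_cases i <;> rfl
  have hpre : ψ ⁻¹' QH = I01 ×ˢ (I01 ×ˢ I01) := by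
    ext z
    simp only [Set.mem_preimage, hψval, QH, Set.mem_setOf_eq, Set.mem_prod]
    constructor
    · intro h; exact ⟨h 0, h 1, h 2⟩
    · rintro ⟨h0, h1, h2⟩ i; fin_cases i <;> simpa
  rw [← mpψ.setLIntegral_comp_preimage_emb ψ.measurableEmbedding F QH, hpre]
  rw [show (volume : Measure (ℝ × ℝ × ℝ)) = Measure.prod volume (Measure.prod volume volume)
    from rfl]
  rw [← Measure.prod_restrict, ← Measure.prod_restrict]
  rw [lintegral_prod (fun z => F (ψ z)) ((hF.comp ψ.measurable).aemeasurable)]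
  refine setLIntegral_congr_fun measurableSet_Ico ?_
  refine (fun s _ => ?_)
  dsimp only
  rw [lintegral_prod (fun q => F (ψ (s, q)))]
  · refine setLIntegral_congr_fun measurableSet_Ico ?_
    refine (fun t _ => ?_)
    dsimp only
    refine setLIntegral_congr_fun measurableSet_Ico ?_
    refine (fun u _ => ?_)
    dsimp only
    rw [hψval]
  · exact (hF.comp (by fun_prop : Measurable fun q : ℝ × ℝ => ψ (s, q))).aemeasurable


lemma shiftIco (k : ℝ → ℝ≥0∞) (hk : Measurable k) (c a b : ℝ) :
    ∫⁻ t in Set.Ico a b, k (t + c) = ∫⁻ t in Set.Ico (a+c) (b+c), k t := by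
  have mp : MeasurePreserving (fun t : ℝ => t + c) volume volume :=
    measurePreserving_add_right volume c
  have := mp.setLIntegral_comp_preimage_emb (measurableEmbedding_addRight c) k
    (Set.Ico (a+c) (b+c))
  rw [← this]
  rw [Set.preimage_add_const_Ico]
  congr 1 <;> ring

lemma perInt (k : ℝ → ℝ≥0∞) (hper : ∀ t, k (t + 1) = k t) :
    ∀ (n : ℤ) (t : ℝ), k (t + n) = k t := by
  have hnat : ∀ (j : ℕ) (t : ℝ), k (t + j) = k t := by
    intro j
    induction j with
    | zero => simp
    | succ i ih =>
        intro t
        rw [show (t + (i + 1 : ℕ) : ℝ) = (t + i) + 1 by push_cast; ring, hper, ih]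
  intro n t
  obtain ⟨j, rfl | rfl⟩ := Int.eq_nat_or_neg n
  · rw [show ((j : ℤ) : ℝ) = (j : ℝ) by push_cast; ring]; exact hnat j t
  · have := hnat j (t - j)
    rw [sub_add_cancel] at this
    rw [show (t + (-(j:ℤ) : ℤ) : ℝ) = t - j by push_cast; ring, this]

lemma shiftP (k : ℝ → ℝ≥0∞) (hk : Measurable k) (hper : ∀ t, k (t + 1) = k t) (c : ℝ) :
    ∫⁻ t in I01, k (t + c) = ∫⁻ t in I01, k t := by
  rw [shiftIco k hk c 0 1, zero_add]
  set n : ℤ := ⌈c⌉ with hn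
  have h1 : c ≤ (n : ℝ) := Int.le_ceil c
  have h2 : (n : ℝ) < c + 1 := by
    have := Int.ceil_lt_add_one c; exact_mod_cast this
  have hsplit : Set.Ico c (1 + c) = Set.Ico c (n : ℝ) ∪ Set.Ico (n : ℝ) (1 + c) := by
    rw [Set.Ico_union_Ico_eq_Ico h1 (by linarith)]
  rw [hsplit, lintegral_union measurableSet_Ico (Set.Ico_disjoint_Ico_same)]
  have p1 : ∫⁻ t in Set.Ico c (n : ℝ), k t = ∫⁻ t in Set.Ico (c - n + 1) 1, k t := by
    have := shiftIco k hk ((n : ℝ) - 1) (c - n + 1) 1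
    rw [show c - ↑n + 1 + (↑n - 1) = c by ring, show (1 : ℝ) + (↑n - 1) = (n:ℝ) by ring] at this
    rw [← this]
    refine setLIntegral_congr_fun measurableSet_Ico (fun t _ => ?_)
    have : (t + ((n : ℝ) - 1)) = t + ((n - 1 : ℤ) : ℝ) := by push_cast; ring
    rw [this, perInt k hper]
  have p2 : ∫⁻ t in Set.Ico (n : ℝ) (1 + c), k t = ∫⁻ t in Set.Ico 0 (c - n + 1), k t := by
    have := shiftIco k hk (n : ℝ) 0 (c - n + 1)
    rw [zero_add, show c - ↑n + 1 + (↑n : ℝ) = 1 + c by ring] at this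
    rw [← this]
    refine setLIntegral_congr_fun measurableSet_Ico (fun t _ => ?_)
    rw [show (t + (n:ℝ)) = t + ((n : ℤ) : ℝ) by push_cast; ring, perInt k hper]
  rw [p1, p2, add_comm, ← lintegral_union measurableSet_Ico
    (Set.Ico_disjoint_Ico_same),
    Set.Ico_union_Ico_eq_Ico (by linarith) (by linarith)]

lemma lemB (h : (Fin 3 → ℝ) → ℝ≥0∞) (hh : Measurable h)
    (hper : ∀ n, IsLatticePoint n → ∀ x, h (Hop n x) = h x) (a : Fin 3 → ℝ) :
    ∫⁻ x in QH, h (Hop a x) = ∫⁻ x in QH, h x := by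
  -- vertical periodicity: h ![A,B,u+1] = h ![A,B,u]
  have hv : ∀ A B u : ℝ, h ![A, B, u + 1] = h ![A, B, u] := by
    intro A B u
    have := hper ![0,0,1] latt3 ![A, B, u]
    rw [show Hop ![0,0,1] ![A,B,u] = ![A, B, u + 1] by
      funext i; fin_cases i <;> (simp [Hop]; try ring)] at this
    exact this
  -- second coordinate: h ![A, t+1, u] = h ![A, t, u + A]
  have h2 : ∀ A t u : ℝ, h ![A, t + 1, u] = h ![A, t, u + A] := by
    intro A t u
    have := hper ![0,1,0] latt2 ![A, t, u + A]
    rw [show Hop ![0,1,0] ![A,t,u+A] = ![A, t + 1, u] by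
      funext i; fin_cases i <;> (simp [Hop]; try ring)] at this
    exact this
  -- first coordinate: h ![s+1, t, u] = h ![s, t, u - t]
  have h3 : ∀ s t u : ℝ, h ![s + 1, t, u] = h ![s, t, u - t] := by
    intro s t u
    have := hper ![1,0,0] latt1 ![s, t, u - t]
    rw [show Hop ![1,0,0] ![s,t,u-t] = ![s + 1, t, u] by
      funext i; fin_cases i <;> (simp [Hop]; try ring)] at this
    exact this
  have hHa : ∀ s t u : ℝ, Hop a ![s, t, u] = ![a 0 + s, a 1 + t, u + (a 2 - a 1 * s + a 0 * t)] := by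
    intro s t u; funext i; fin_cases i <;> (simp [Hop]; try ring)
  -- slice measurability
  have hkmeas : ∀ A B : ℝ, Measurable (fun u => h ![A, B, u]) :=
    fun A B => hh.comp (measurable_vec3 A B)
  have hkper : ∀ A B : ℝ, ∀ u : ℝ, h ![A, B, u + 1] = h ![A, B, u] := hv
  -- K
  set K : ℝ → ℝ → ℝ≥0∞ := fun s t => ∫⁻ u in I01, h ![s, t, u] with hK
  have hKmeas : Measurable fun q : ℝ × ℝ => K q.1 q.2 := by
    apply Measurable.lintegral_prod_right
    exact hh.comp measurable_vec3'
  have hKper2 : ∀ s t, K s (t + 1) = K s t := by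
    intro s t
    have : ∀ u, h ![s, t + 1, u] = (fun u => h ![s, t, u]) (u + s) := fun u => h2 s t u
    calc K s (t+1) = ∫⁻ u in I01, h ![s, t, u + s] := by
          refine setLIntegral_congr_fun measurableSet_Ico
            (fun u _ => ?_)
          exact h2 s t u
      _ = K s t := shiftP _ (hkmeas s t) (hkper s t) s
  have hKper1 : ∀ s t, K (s + 1) t = K s t := by
    intro s t
    calc K (s+1) t = ∫⁻ u in I01, h ![s, t, u - t] := by
          refine setLIntegral_congr_fun measurableSet_Ico
            (fun u _ => ?_)
          exact h3 s t u
      _ = K s t := by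
          have := shiftP (fun u => h ![s, t, u]) (hkmeas s t) (hkper s t) (-t)
          simp only [← sub_eq_add_neg] at this
          exact this
  set L : ℝ → ℝ≥0∞ := fun s => ∫⁻ t in I01, K s t with hL
  have hLmeas : Measurable L := by
    apply Measurable.lintegral_prod_right
    exact hKmeas
  have hLper : ∀ s, L (s + 1) = L s := by
    intro s
    refine setLIntegral_congr_fun measurableSet_Ico
      (fun t _ => hKper1 s t)
  have hmeasHa : Measurable fun x => h (Hop a x) := by
    refine hh.comp ?_
    apply measurable_pi_lambda; intro i; fin_cases i <;> simp [Hop] <;> fun_prop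
  rw [bridge _ hmeasHa, bridge _ hh]
  have inner : ∀ s t : ℝ, (∫⁻ u in I01, h (Hop a ![s, t, u])) = K (a 0 + s) (a 1 + t) := by
    intro s t
    have : ∀ u : ℝ, h (Hop a ![s, t, u])
        = (fun u => h ![a 0 + s, a 1 + t, u]) (u + (a 2 - a 1 * s + a 0 * t)) := by
      intro u; rw [hHa]
    calc (∫⁻ u in I01, h (Hop a ![s, t, u]))
        = ∫⁻ u in I01, h ![a 0 + s, a 1 + t, u + (a 2 - a 1 * s + a 0 * t)] := by
          refine setLIntegral_congr_fun measurableSet_Ico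
            (fun u _ => ?_)
          rw [hHa]
      _ = K (a 0 + s) (a 1 + t) := shiftP _ (hkmeas _ _) (hkper _ _) _
  have middle : ∀ s : ℝ, (∫⁻ t in I01, K (a 0 + s) (a 1 + t)) = L (a 0 + s) := by
    intro s
    have hkm : Measurable fun t => K (a 0 + s) t :=
      hKmeas.comp (measurable_const.prodMk measurable_id)
    have hkp : ∀ t : ℝ, K (a 0 + s) (t + 1) = K (a 0 + s) t := fun t => hKper2 _ t
    calc (∫⁻ t in I01, K (a 0 + s) (a 1 + t)) = ∫⁻ t in I01, K (a 0 + s) (t + a 1) := by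
          refine setLIntegral_congr_fun measurableSet_Ico
            (fun t _ => by rw [add_comm (a 1) t])
      _ = L (a 0 + s) := shiftP _ hkm hkp (a 1)
  calc (∫⁻ s in I01, ∫⁻ t in I01, ∫⁻ u in I01, h (Hop a ![s, t, u]))
      = ∫⁻ s in I01, L (a 0 + s) := by
        refine setLIntegral_congr_fun measurableSet_Ico
          (fun s _ => ?_)
        rw [← middle s]
        refine setLIntegral_congr_fun measurableSet_Ico
          (fun t _ => ?_)
        exact inner s t
    _ = ∫⁻ s in I01, L (s + a 0) := by
        refine setLIntegral_congr_fun measurableSet_Ico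
          (fun s _ => by rw [add_comm (a 0) s])
    _ = ∫⁻ s in I01, L s := shiftP _ hLmeas hLper (a 0)
    _ = ∫⁻ s in I01, ∫⁻ t in I01, ∫⁻ u in I01, h ![s, t, u] := rfl

lemma jensen_pt {α : Type*} [MeasurableSpace α] {μ : Measure α} [SigmaFinite μ]
    (p : ℝ) (hp : 1 ≤ p)
    (w : α → ℝ) (hw : Measurable w) (M : ℝ) (hM : ∀ y, |w y| ≤ M) (hM0 : 0 ≤ M)
    (d : α → ℝ) (hd : Measurable d) (hd0 : ∀ y, 0 ≤ d y)
    (hdi : Integrable d μ) (hc : (∫ y, d y ∂μ) ≠ 0)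
    (hgi : Integrable (fun y => |w y| ^ p * d y) μ) :
    |(∫ y, w y * d y ∂μ) / (∫ y, d y ∂μ)| ^ p * (∫ y, d y ∂μ)
      ≤ ∫ y, |w y| ^ p * d y ∂μ := by
  have hp0 : 0 ≤ p := le_trans zero_le_one hp
  set c : ℝ := ∫ y, d y ∂μ with hcdef
  have hc0 : 0 < c := lt_of_le_of_ne (integral_nonneg hd0) (Ne.symm hc)
  set ν : Measure α := μ.withDensity (fun y => ((d y).toNNReal : ℝ≥0∞)) with hν
  have hdens : Measurable fun y => (d y).toNNReal := hd.real_toNNReal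
  have hνuniv : ν univ = ENNReal.ofReal c := by
    rw [hν, withDensity_apply _ MeasurableSet.univ, Measure.restrict_univ]
    show (∫⁻ a, ENNReal.ofReal (d a) ∂μ) = ENNReal.ofReal c
    rw [← ofReal_integral_eq_lintegral_ofReal hdi (Filter.Eventually.of_forall hd0)]
  haveI : IsFiniteMeasure ν := ⟨by rw [hνuniv]; exact ENNReal.ofReal_lt_top⟩
  haveI : NeZero ν := ⟨by
    intro h0
    have := hνuniv
    rw [h0] at this
    simp only [Measure.coe_zero, Pi.zero_apply] at this
    exact absurd this.symm (by simpa [ENNReal.ofReal_eq_zero] using not_le.2 hc0)⟩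
  have key : ∀ g : α → ℝ, (∫ y, g y ∂ν) = ∫ y, d y * g y ∂μ := by
    intro g
    rw [hν, integral_withDensity_eq_integral_smul hdens g]
    refine integral_congr_ae (Filter.Eventually.of_forall fun y => ?_)
    simp [NNReal.smul_def, Real.coe_toNNReal _ (hd0 y)]
  have hInt1 : Integrable (fun y => |w y|) ν := by
    refine Integrable.mono' (integrable_const M) (hw.abs.aestronglyMeasurable) ?_
    exact Filter.Eventually.of_forall fun y => by
      rw [Real.norm_eq_abs, abs_abs]; exact hM y
  have hInt2 : Integrable (fun y => |w y| ^ p) ν := by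
    refine Integrable.mono' (integrable_const (M ^ p))
      (((Real.continuous_rpow_const hp0).measurable.comp hw.abs).aestronglyMeasurable) ?_
    exact Filter.Eventually.of_forall fun y => by
      rw [Real.norm_eq_abs, abs_of_nonneg (Real.rpow_nonneg (abs_nonneg _) p)]
      exact Real.rpow_le_rpow (abs_nonneg _) (hM y) hp0
  have jensen := (convexOn_rpow hp).map_average_le
    (f := fun y => |w y|) (μ := ν)
    (by
      have : Continuous fun x : ℝ => x ^ p := by
        apply continuous_iff_continuousAt.2
        intro x
        exact Real.continuousAt_rpow_const x p (Or.inr hp0)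
      exact this.continuousOn)
    isClosed_Ici
    (Filter.Eventually.of_forall fun y => abs_nonneg (w y))
    hInt1
    (by exact hInt2)
  -- averages
  have havg : ∀ g : α → ℝ, (⨍ y, g y ∂ν) = c⁻¹ * ∫ y, d y * g y ∂μ := by
    intro g
    rw [average_eq, key g, measureReal_def, hνuniv, ENNReal.toReal_ofReal hc0.le, smul_eq_mul]
  have havg1 := havg (fun y => |w y|)
  have havg2 := havg (fun y => |w y| ^ p)
  rw [havg1, havg2] at jensen
  have hnum : |(∫ y, w y * d y ∂μ)| ≤ ∫ y, d y * |w y| ∂μ := by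
    calc |(∫ y, w y * d y ∂μ)| ≤ ∫ y, ‖w y * d y‖ ∂μ := by
          simpa [Real.norm_eq_abs] using
            norm_integral_le_integral_norm (μ := μ) (f := fun y => w y * d y)
      _ = ∫ y, d y * |w y| ∂μ := by
          refine integral_congr_ae (Filter.Eventually.of_forall fun y => ?_)
          simp only [Real.norm_eq_abs, abs_mul]
          rw [abs_of_nonneg (hd0 y)]; ring
  have step1 : |(∫ y, w y * d y ∂μ) / c| ≤ c⁻¹ * ∫ y, d y * |w y| ∂μ := by
    rw [abs_div, abs_of_pos hc0, div_eq_inv_mul]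
    exact mul_le_mul_of_nonneg_left hnum (inv_nonneg.2 hc0.le)
  have step2 : |(∫ y, w y * d y ∂μ) / c| ^ p ≤ (c⁻¹ * ∫ y, d y * |w y| ∂μ) ^ p :=
    Real.rpow_le_rpow (abs_nonneg _) step1 hp0
  have step3 : (c⁻¹ * ∫ y, d y * |w y| ∂μ) ^ p ≤ c⁻¹ * ∫ y, d y * |w y| ^ p ∂μ :=
    jensen
  have final : |(∫ y, w y * d y ∂μ) / c| ^ p * c ≤ ∫ y, d y * |w y| ^ p ∂μ := by
    have := mul_le_mul_of_nonneg_right (le_trans step2 step3) hc0.le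
    rwa [mul_comm (c⁻¹ * ∫ y, d y * |w y| ^ p ∂μ) c, ← mul_assoc,
      mul_inv_cancel₀ (ne_of_gt hc0), one_mul] at this
  calc |(∫ y, w y * d y ∂μ) / c| ^ p * c ≤ ∫ y, d y * |w y| ^ p ∂μ := final
    _ = ∫ y, |w y| ^ p * d y ∂μ := by
        refine integral_congr_ae (Filter.Eventually.of_forall fun y => ?_)
        ring



lemma hop_inv (x z : Fin 3 → ℝ) : Hop x (-(Hop (-z) x)) = z := by
  funext i; fin_cases i <;> (simp [Hop]; try ring)

lemma measurable_hopT : Measurable fun q : (Fin 3 → ℝ) × (Fin 3 → ℝ) => Hop q.1 (-q.2) := by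
  apply measurable_pi_lambda; intro i; fin_cases i <;> (simp [Hop]; fun_prop)

lemma measurable_hopT1 (x : Fin 3 → ℝ) : Measurable fun y : Fin 3 → ℝ => Hop x (-y) :=
  measurable_hopT.comp (measurable_const.prodMk measurable_id)

lemma hconv_meas (f ρ : (Fin 3 → ℝ) → ℝ) (hf : Measurable f) (hρ : Measurable ρ) :
    Measurable (Hconv f ρ) := by
  have hj : Measurable fun q : (Fin 3 → ℝ) × (Fin 3 → ℝ) => f q.2 * ρ (Hop q.1 (-q.2)) :=
    (hf.comp measurable_snd).mul (hρ.comp measurable_hopT)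
  exact hj.stronglyMeasurable.integral_prod_right'.measurable


/-- Jensen-type estimate for periodic Heisenberg convolutions (Lemma 8.1.10 analogue):
for `p ≥ 1`, `m ≥ 0` measurable `1_H`-periodic with `∫_{Q_H} m = 1`, `w` measurable
bounded `1_H`-periodic, `E := w·m`, and `ρ ≥ 0` with `∫ ρ = 1`, one has
`∫_{Q_H} |(E∗ρ)/(m∗ρ)|^p (m∗ρ) dx ≤ ∫_{Q_H} |w|^p m dx`, with the convention that the
quotient term vanishes where `m∗ρ = 0`. -/
theorem jensen_periodic_convolution
    (p : ℝ) (hp : 1 ≤ p)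
    (m w ρ : (Fin 3 → ℝ) → ℝ)
    (hm : Measurable m) (hm0 : ∀ x, 0 ≤ m x) (hmper : IsHPeriodic m)
    (hmint : IntegrableOn m QH volume) (hm1 : ∫ x in QH, m x = 1)
    (hw : Measurable w) (hwper : IsHPeriodic w) (hwb : ∃ M, ∀ x, |w x| ≤ M)
    (hρ : Measurable ρ) (hρ0 : ∀ x, 0 ≤ ρ x)
    (hρint : Integrable ρ volume) (hρ1 : ∫ x, ρ x = 1) :
    ∫ x in QH,
        (if Hconv m ρ x = 0 then 0
         else |Hconv (fun y => w y * m y) ρ x / Hconv m ρ x| ^ p * Hconv m ρ x)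
      ≤ ∫ x in QH, |w x| ^ p * m x := by
  obtain ⟨M, hM⟩ := hwb
  have hM0 : 0 ≤ M := le_trans (abs_nonneg _) (hM 0)
  have hp0 : 0 ≤ p := le_trans zero_le_one hp
  set E : (Fin 3 → ℝ) → ℝ := fun y => w y * m y with hE
  set gm : (Fin 3 → ℝ) → ℝ := fun x => |w x| ^ p * m x with hgm
  have hgmeas : Measurable fun x => |w x| ^ p :=
    (Real.continuous_rpow_const hp0).measurable.comp hw.abs
  have hgmmeas : Measurable gm := hgmeas.mul hm
  have hgm0 : ∀ x, 0 ≤ gm x := fun x =>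
    mul_nonneg (Real.rpow_nonneg (abs_nonneg _) p) (hm0 x)
  set Φ : (Fin 3 → ℝ) → ℝ := fun x =>
    if Hconv m ρ x = 0 then 0
    else |Hconv E ρ x / Hconv m ρ x| ^ p * Hconv m ρ x with hΦ
  have hconvm : Measurable (Hconv m ρ) := hconv_meas m ρ hm hρ
  have hconvE : Measurable (Hconv E ρ) := hconv_meas E ρ (hw.mul hm) hρ
  have hΦmeas : Measurable Φ := by
    refine Measurable.ite (hconvm (measurableSet_singleton 0)) measurable_const ?_
    exact (((Real.continuous_rpow_const hp0).measurable.comp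
      (hconvE.div hconvm).abs).mul hconvm)
  have hΦ0 : ∀ x, 0 ≤ Φ x := by
    intro x
    rw [hΦ]
    by_cases hc : Hconv m ρ x = 0
    · simp [hc]
    · simp only [hc, if_false]
      have : 0 ≤ Hconv m ρ x :=
        integral_nonneg fun y => mul_nonneg (hm0 y) (hρ0 _)
      exact mul_nonneg (Real.rpow_nonneg (abs_nonneg _) p) this
  set Lgm : (Fin 3 → ℝ) → ℝ≥0∞ :=
    fun x => ∫⁻ y, ENNReal.ofReal (gm y * ρ (Hop x (-y))) with hLgm
  -- pointwise Jensen bound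
  have S4 : ∀ x, ENNReal.ofReal (Φ x) ≤ Lgm x := by
    intro x
    by_cases hc : Hconv m ρ x = 0
    · simp [hΦ, hc]
    by_cases htop : Lgm x = ⊤
    · rw [htop]; exact le_top
    set d : (Fin 3 → ℝ) → ℝ := fun y => m y * ρ (Hop x (-y)) with hd
    have hdmeas : Measurable d := hm.mul (hρ.comp (measurable_hopT1 x))
    have hd0 : ∀ y, 0 ≤ d y := fun y => mul_nonneg (hm0 y) (hρ0 _)
    have hcd : Hconv m ρ x = ∫ y, d y := rfl
    have hdi : Integrable d volume := by
      by_contra hni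
      exact hc (integral_undef hni)
    have hgd_eq : ∀ y, gm y * ρ (Hop x (-y)) = |w y| ^ p * d y := by
      intro y; rw [hgm, hd]; ring
    have hgdmeas : Measurable fun y => |w y| ^ p * d y := hgmeas.mul hdmeas
    have hgdi : Integrable (fun y => |w y| ^ p * d y) volume := by
      refine ⟨hgdmeas.aestronglyMeasurable, ?_⟩
      rw [hasFiniteIntegral_iff_ofReal
        (Filter.Eventually.of_forall fun y =>
          mul_nonneg (Real.rpow_nonneg (abs_nonneg _) p) (hd0 y))]
      have : (∫⁻ y, ENNReal.ofReal (|w y| ^ p * d y)) = Lgm x := by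
        rw [hLgm]
        exact lintegral_congr fun y => by rw [hgd_eq y]
      rw [this]
      exact lt_top_iff_ne_top.2 htop
    have hEeq : Hconv E ρ x = ∫ y, w y * d y := by
      refine integral_congr_ae (Filter.Eventually.of_forall fun y => ?_)
      simp only [hE, hd]; ring
    have jensen := jensen_pt p hp w hw M hM hM0 d hdmeas hd0 hdi
      (by rw [← hcd]; exact hc) hgdi
    have hΦx : Φ x = |(∫ y, w y * d y) / (∫ y, d y)| ^ p * (∫ y, d y) := by
      rw [hΦ]; simp only [hc, if_false]; rw [hEeq, hcd]
    rw [hΦx]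
    calc ENNReal.ofReal (|(∫ y, w y * d y) / (∫ y, d y)| ^ p * (∫ y, d y))
        ≤ ENNReal.ofReal (∫ y, |w y| ^ p * d y) := ENNReal.ofReal_le_ofReal jensen
      _ = ∫⁻ y, ENNReal.ofReal (|w y| ^ p * d y) :=
          ofReal_integral_eq_lintegral_ofReal hgdi
            (Filter.Eventually.of_forall fun y =>
              mul_nonneg (Real.rpow_nonneg (abs_nonneg _) p) (hd0 y))
      _ = Lgm x := by
          rw [hLgm]; exact lintegral_congr fun y => by rw [hgd_eq y]
  -- periodization
  set J : ℝ≥0∞ := ∫⁻ x in QH, ENNReal.ofReal (gm x) with hJ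
  have hsub : ∀ x, Lgm x = ∫⁻ z, ENNReal.ofReal (ρ z) * ENNReal.ofReal (gm (Hop (-z) x)) := by
    intro x
    have hf : Measurable fun y => ENNReal.ofReal (gm y) * ENNReal.ofReal (ρ (Hop x (-y))) :=
      (ENNReal.measurable_ofReal.comp hgmmeas).mul
        (ENNReal.measurable_ofReal.comp (hρ.comp (measurable_hopT1 x)))
    calc Lgm x = ∫⁻ y, ENNReal.ofReal (gm y) * ENNReal.ofReal (ρ (Hop x (-y))) := by
          rw [hLgm]
          exact lintegral_congr fun y => ENNReal.ofReal_mul (hgm0 y)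
      _ = ∫⁻ z, ENNReal.ofReal (gm (Hop (-z) x)) * ENNReal.ofReal (ρ (Hop x (-(Hop (-z) x)))) :=
          ((mp_phi x).lintegral_comp hf).symm
      _ = ∫⁻ z, ENNReal.ofReal (ρ z) * ENNReal.ofReal (gm (Hop (-z) x)) := by
          refine lintegral_congr fun z => ?_
          rw [hop_inv x z, mul_comm]
  have hgmper : ∀ n, IsLatticePoint n → ∀ x, gm (Hop n x) = gm x := by
    intro n hn x
    rw [hgm]
    simp only
    rw [hwper n hn x, hmper n hn x]
  have hmeas2 : Measurable fun q : (Fin 3 → ℝ) × (Fin 3 → ℝ) =>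
      ENNReal.ofReal (ρ q.2) * ENNReal.ofReal (gm (Hop (-q.2) q.1)) := by
    refine Measurable.mul (f := fun q : (Fin 3 → ℝ) × (Fin 3 → ℝ) => ENNReal.ofReal (ρ q.2))
      (g := fun q : (Fin 3 → ℝ) × (Fin 3 → ℝ) => ENNReal.ofReal (gm (Hop (-q.2) q.1))) ?_ ?_
    · exact ENNReal.measurable_ofReal.comp (hρ.comp measurable_snd)
    · refine ENNReal.measurable_ofReal.comp (hgmmeas.comp ?_)
      have : (fun q : (Fin 3 → ℝ) × (Fin 3 → ℝ) => Hop (-q.2) q.1)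
          = (fun q : (Fin 3 → ℝ) × (Fin 3 → ℝ) => Hop q.1 (-q.2)) ∘ (fun q => (-q.2, -q.1)) := by
        funext q; simp
      rw [this]
      exact measurable_hopT.comp ((measurable_snd.neg).prodMk (measurable_fst.neg))
  have S6 : (∫⁻ x in QH, Lgm x) = J := by
    have swap := lintegral_lintegral_swap (μ := volume.restrict QH) (ν := volume)
      (f := fun x z => ENNReal.ofReal (ρ z) * ENNReal.ofReal (gm (Hop (-z) x)))
      hmeas2.aemeasurable
    calc (∫⁻ x in QH, Lgm x)
        = ∫⁻ x in QH, ∫⁻ z, ENNReal.ofReal (ρ z) * ENNReal.ofReal (gm (Hop (-z) x)) :=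
          lintegral_congr fun x => hsub x
      _ = ∫⁻ z, ∫⁻ x in QH, ENNReal.ofReal (ρ z) * ENNReal.ofReal (gm (Hop (-z) x)) := swap
      _ = ∫⁻ z, ENNReal.ofReal (ρ z) * ∫⁻ x in QH, ENNReal.ofReal (gm (Hop (-z) x)) := by
          refine lintegral_congr fun z => ?_
          rw [lintegral_const_mul]
          have h1 : Measurable fun x : Fin 3 → ℝ => gm (Hop (-z) (-(-x))) :=
            hgmmeas.comp ((measurable_hopT1 (-z)).comp measurable_neg)
          simp only [neg_neg] at h1
          exact ENNReal.measurable_ofReal.comp h1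
      _ = ∫⁻ z, ENNReal.ofReal (ρ z) * J := by
          refine lintegral_congr fun z => ?_
          rw [lemB (fun x => ENNReal.ofReal (gm x))
            (ENNReal.measurable_ofReal.comp hgmmeas)
            (fun n hn x => congrArg ENNReal.ofReal (hgmper n hn x)) (-z)]
      _ = (∫⁻ z, ENNReal.ofReal (ρ z)) * J :=
          lintegral_mul_const _ (ENNReal.measurable_ofReal.comp hρ)
      _ = J := by
          rw [← ofReal_integral_eq_lintegral_ofReal hρint
            (Filter.Eventually.of_forall hρ0), hρ1]
          simp
  -- integrability of gm on QH
  have hgmQH : IntegrableOn gm QH volume := by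
    refine Integrable.bdd_mul hmint hgmeas.aestronglyMeasurable (c := M ^ p) (Filter.Eventually.of_forall fun x => ?_)
    rw [Real.norm_eq_abs, abs_of_nonneg (Real.rpow_nonneg (abs_nonneg _) p)]
    exact Real.rpow_le_rpow (abs_nonneg _) (hM x) hp0
  have hJfin : J ≠ ⊤ := by
    have hle : J ≤ ∫⁻ x in QH, (‖gm x‖₊ : ℝ≥0∞) :=
      lintegral_mono fun x => Real.ofReal_le_enorm (gm x)
    exact ne_top_of_le_ne_top (lt_top_iff_ne_top.1 hgmQH.2) hle
  have S5 : (∫⁻ x in QH, ENNReal.ofReal (Φ x)) ≤ J := by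
    calc (∫⁻ x in QH, ENNReal.ofReal (Φ x)) ≤ ∫⁻ x in QH, Lgm x :=
          lintegral_mono fun x => S4 x
      _ = J := S6
  calc (∫ x in QH, Φ x)
      = (∫⁻ x in QH, ENNReal.ofReal (Φ x)).toReal :=
        integral_eq_lintegral_of_nonneg_ae (Filter.Eventually.of_forall hΦ0)
          hΦmeas.aestronglyMeasurable
    _ ≤ J.toReal := ENNReal.toReal_mono hJfin S5
    _ = ∫ x in QH, gm x := by
        rw [hJ, ← integral_eq_lintegral_of_nonneg_ae (Filter.Eventually.of_forall hgm0)
          hgmmeas.aestronglyMeasurable]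
end
end

section
/- Periodicity of the value function (Lemma uper): let T > 0, let f : ℝ³ × [0,T] → ℝ be continuous, bounded, and 1_H-periodic in x, and let g : ℝ³ → ℝ be continuous, bounded, and 1_H-periodic. Then the value function u satisfies u(n ⊕ x, t) = u(x, t) for every n ∈ ℤ³, x ∈ ℝ³, t ∈ [0,T]. -/
open MeasureTheory

noncomputable section

/-- `α B^T(x) := (α₁, α₂, −x₂α₁ + x₁α₂)`. -/
def Bmul (α : Fin 2 → ℝ) (x : Fin 3 → ℝ) : Fin 3 → ℝ :=
  ![α 0, α 1, -(x 1) * α 0 + x 0 * α 1]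

/-- `(γ,α) ∈ A(x,t)`: `α ∈ L²([t,T];ℝ²)` and `γ(s) = x + ∫_t^s α Bᵀ(γ)` on `[t,T]`. -/
def Admissible (T t : ℝ) (x : Fin 3 → ℝ)
    (γ : ℝ → Fin 3 → ℝ) (α : ℝ → Fin 2 → ℝ) : Prop :=
  MemLp α 2 (volume.restrict (Set.Icc t T)) ∧
  ∀ s ∈ Set.Icc t T, γ s = x + ∫ τ in t..s, Bmul (α τ) (γ τ)

/-- The cost `J_t(γ,α) = ∫_t^T (½|α|² + f(γ(s),s)) ds + g(γ(T))`. -/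
def cost (T : ℝ) (f : (Fin 3 → ℝ) → ℝ → ℝ) (g : (Fin 3 → ℝ) → ℝ) (t : ℝ)
    (γ : ℝ → Fin 3 → ℝ) (α : ℝ → Fin 2 → ℝ) : ℝ :=
  (∫ s in t..T, ((1 : ℝ) / 2 * ((α s 0) ^ 2 + (α s 1) ^ 2) + f (γ s) s)) + g (γ T)

/-- The value function `u(x,t) = inf { J_t(γ,α) : (γ,α) ∈ A(x,t) }`. -/
def val (T : ℝ) (f : (Fin 3 → ℝ) → ℝ → ℝ) (g : (Fin 3 → ℝ) → ℝ)
    (x : Fin 3 → ℝ) (t : ℝ) : ℝ :=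
  sInf {c | ∃ γ α, Admissible T t x γ α ∧ c = cost T f g t γ α}

lemma Hop_neg_Hop (n x : Fin 3 → ℝ) : Hop (-n) (Hop n x) = x := by
  funext i; fin_cases i <;> simp [Hop] <;> ring

lemma lattice_neg {n : Fin 3 → ℝ} (h : IsLatticePoint n) : IsLatticePoint (-n) := by
  intro i; obtain ⟨k, hk⟩ := h i; exact ⟨-k, by simp [hk]⟩

lemma Bmul_Hop (α : Fin 2 → ℝ) (n y : Fin 3 → ℝ) :
    Bmul α (Hop n y) = Bmul α y + (-(n 1) * α 0 + n 0 * α 1) • (![0,0,1] : Fin 3 → ℝ) := by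
  funext i; fin_cases i <;> simp [Bmul, Hop] <;> ring

lemma intervalIntegral_apply {f : ℝ → Fin 3 → ℝ} {a b : ℝ}
    (hf : IntervalIntegrable f volume a b) (i : Fin 3) :
    (∫ x in a..b, f x) i = ∫ x in a..b, f x i := by
  have := (ContinuousLinearMap.proj (R := ℝ) (φ := fun _ : Fin 3 => ℝ) i).intervalIntegral_comp_comm hf
  simpa using this.symm

lemma Hop_add_eq (n x I : Fin 3 → ℝ) (K : ℝ) (hK : K = -(n 1) * I 0 + n 0 * I 1) :
    Hop n (x + I) = Hop n x + (I + K • (![0,0,1] : Fin 3 → ℝ)) := by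
  subst hK; funext i; fin_cases i <;> simp [Hop, Matrix.vecHead, Matrix.vecTail, Function.comp] <;> ring

lemma admissible_shift (T t : ℝ) (x n : Fin 3 → ℝ) (γ : ℝ → Fin 3 → ℝ)
    (α : ℝ → Fin 2 → ℝ) (h : Admissible T t x γ α) :
    Admissible T t (Hop n x) (fun s => Hop n (γ s)) α := by
  obtain ⟨hα, hγ⟩ := h
  refine ⟨hα, ?_⟩
  intro s hs
  obtain ⟨hts, hsT⟩ := hs
  -- integrability of components of α
  have hαi : ∀ i : Fin 2, IntervalIntegrable (fun τ => α τ i) volume t s := by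
    intro i
    have h1 : MemLp (fun τ => α τ i) 2 (volume.restrict (Set.Icc t T)) :=
      (ContinuousLinearMap.proj (R := ℝ) (φ := fun _ : Fin 2 => ℝ) i).comp_memLp' hα
    have h2 : IntegrableOn (fun τ => α τ i) (Set.Icc t T) volume :=
      h1.integrable one_le_two
    have h3 : IntegrableOn (fun τ => α τ i) (Set.Ioc t s) volume :=
      h2.mono_set (Set.Ioc_subset_Icc_self.trans (Set.Icc_subset_Icc_right hsT))
    exact (intervalIntegrable_iff_integrableOn_Ioc_of_le hts).mpr h3
  set k : ℝ → ℝ := fun τ => -(n 1) * α τ 0 + n 0 * α τ 1 with hk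
  have hkint : IntervalIntegrable k volume t s :=
    ((hαi 0).const_mul _).add ((hαi 1).const_mul _)
  have hcint : IntervalIntegrable (fun τ => k τ • (![0,0,1] : Fin 3 → ℝ)) volume t s :=
    ⟨hkint.1.smul_const _, hkint.2.smul_const _⟩
  have hBH : (fun τ => Bmul (α τ) (Hop n (γ τ)))
      = fun τ => Bmul (α τ) (γ τ) + k τ • (![0,0,1] : Fin 3 → ℝ) :=
    funext fun τ => Bmul_Hop (α τ) n (γ τ)
  have key := hγ s ⟨hts, hsT⟩
  show Hop n (γ s) = _
  by_cases hH : IntervalIntegrable (fun τ => Bmul (α τ) (γ τ)) volume t s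
  · rw [hBH, intervalIntegral.integral_add hH hcint, intervalIntegral.integral_smul_const,
      key]
    have hk0 : (∫ τ in t..s, k τ) =
        -(n 1) * (∫ τ in t..s, α τ 0) + n 0 * (∫ τ in t..s, α τ 1) := by
      rw [hk]
      rw [intervalIntegral.integral_add ((hαi 0).const_mul _) ((hαi 1).const_mul _),
        intervalIntegral.integral_const_mul, intervalIntegral.integral_const_mul]
    have hI0 : (∫ τ in t..s, Bmul (α τ) (γ τ)) 0 = ∫ τ in t..s, α τ 0 := by
      rw [intervalIntegral_apply hH]; simp [Bmul]
    have hI1 : (∫ τ in t..s, Bmul (α τ) (γ τ)) 1 = ∫ τ in t..s, α τ 1 := by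
      rw [intervalIntegral_apply hH]; simp [Bmul]
    exact Hop_add_eq n x _ _ (by rw [hk0, ← hI0, ← hI1])
  · have h4 : (fun τ => Bmul (α τ) (Hop n (γ τ)) - k τ • (![0,0,1] : Fin 3 → ℝ))
        = fun τ => Bmul (α τ) (γ τ) := by
      funext τ
      rw [congrFun hBH τ, add_sub_cancel_right]
    have h2 : ¬ IntervalIntegrable (fun τ => Bmul (α τ) (Hop n (γ τ))) volume t s := by
      intro hcon
      exact hH (h4 ▸ hcon.sub hcint)
    rw [intervalIntegral.integral_undef h2, key, intervalIntegral.integral_undef hH]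
    simp

lemma cost_shift (T : ℝ) (f : (Fin 3 → ℝ) → ℝ → ℝ) (g : (Fin 3 → ℝ) → ℝ) (t : ℝ)
    (γ : ℝ → Fin 3 → ℝ) (α : ℝ → Fin 2 → ℝ) (n : Fin 3 → ℝ) (hn : IsLatticePoint n)
    (hfper : ∀ m : Fin 3 → ℝ, IsLatticePoint m → ∀ x t, f (Hop m x) t = f x t)
    (hgper : ∀ m : Fin 3 → ℝ, IsLatticePoint m → ∀ x, g (Hop m x) = g x) :
    cost T f g t (fun s => Hop n (γ s)) α = cost T f g t γ α := by
  unfold cost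
  rw [hgper n hn]
  congr 1
  apply intervalIntegral.integral_congr
  intro s _
  simp [hfper n hn]

/-- Periodicity of the value function (Lemma uper): if `f` and `g` are continuous,
bounded and `1_H`-periodic in `x`, then `u(n ⊕ x, t) = u(x, t)` for all `n ∈ ℤ³`,
`x ∈ ℝ³`, `t ∈ [0,T]`. -/
theorem value_function_periodic
    (T : ℝ) (hT : 0 < T)
    (f : (Fin 3 → ℝ) → ℝ → ℝ) (g : (Fin 3 → ℝ) → ℝ)
    (hfc : Continuous fun p : (Fin 3 → ℝ) × ℝ => f p.1 p.2)
    (hfb : ∃ M, ∀ x t, |f x t| ≤ M)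
    (hfper : ∀ n : Fin 3 → ℝ, IsLatticePoint n → ∀ x t, f (Hop n x) t = f x t)
    (hgc : Continuous g) (hgb : ∃ M, ∀ x, |g x| ≤ M)
    (hgper : ∀ n : Fin 3 → ℝ, IsLatticePoint n → ∀ x, g (Hop n x) = g x) :
    ∀ n : Fin 3 → ℝ, IsLatticePoint n → ∀ x : Fin 3 → ℝ, ∀ t ∈ Set.Icc 0 T,
      val T f g (Hop n x) t = val T f g x t := by
  have key : ∀ m : Fin 3 → ℝ, IsLatticePoint m → ∀ y : Fin 3 → ℝ, ∀ r : ℝ,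
      {c | ∃ γ α, Admissible T r y γ α ∧ c = cost T f g r γ α} ⊆
      {c | ∃ γ α, Admissible T r (Hop m y) γ α ∧ c = cost T f g r γ α} := by
    rintro m hm y r c ⟨γ, α, hadm, rfl⟩
    exact ⟨fun s => Hop m (γ s), α, admissible_shift T r y m γ α hadm,
      (cost_shift T f g r γ α m hm hfper hgper).symm⟩
  intro n hn x t _
  unfold val
  congr 1
  apply Set.Subset.antisymm
  · have h := key (-n) (lattice_neg hn) (Hop n x) t
    rwa [Hop_neg_Hop] at h
  · exact key n hn x t
end
end
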